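/- If h is a strictly increasing apart sequence of positive naturals and one forms the sequence h' given by h' n = h(2n) + h(2n+1) (sums of consecutive disjoint pairs), then h' is strictly increasing, apart, no element of h' is a power of 2, and every adjacent sum of h' is an adjacent sum of h. -/

import Mathlib

/-- λ(n): the 2-adic valuation of n (least exponent in binary expansion). -/
def lam (n : ℕ) : ℕ := padicValNat 2 n

/-- μ(n): ⌊log₂ n⌋ (greatest exponent in binary expansion). -/
def mu (n : ℕ) : ℕ := Nat.log 2 n

/-- Apartness condition for a sequence. -/
def Apart (h : ℕ → ℕ) : Prop := ∀ i j, i < j → mu (h i) < lam (h j)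

/-- Sum of adjacent elements h i + h (i+1) + ... + h j. -/
def adjSum (h : ℕ → ℕ) (i j : ℕ) : ℕ := ∑ t ∈ Finset.Icc i j, h t

lemma lam_le_mu {n : ℕ} (hn : 0 < n) : lam n ≤ mu n := by
  have h1 : (2:ℕ) ^ lam n ≤ n := Nat.le_of_dvd hn pow_padicValNat_dvd
  exact (Nat.le_log_iff_pow_le one_lt_two hn.ne').mpr h1

lemma lam_add {a b : ℕ} (ha : 0 < a) (hb : 0 < b) (hab : mu a < lam b) :
    lam (a + b) = lam a := by
  have hla : lam a < lam b := lt_of_le_of_lt (lam_le_mu ha) hab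
  have hdb : (2:ℕ) ^ (lam a + 1) ∣ b := by
    refine dvd_trans (pow_dvd_pow 2 hla) pow_padicValNat_dvd
  have hda : ¬ (2:ℕ) ^ (lam a + 1) ∣ a := pow_succ_padicValNat_not_dvd ha.ne'
  have hsum : 0 < a + b := by omega
  apply le_antisymm
  · by_contra hlt
    push_neg at hlt
    have h1 : (2:ℕ) ^ (lam a + 1) ∣ a + b :=
      dvd_trans (pow_dvd_pow 2 hlt) pow_padicValNat_dvd
    have h2 : (2:ℕ) ^ (lam a + 1) ∣ b + a := by rwa [Nat.add_comm a b] at h1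
    exact hda ((Nat.dvd_add_right hdb).mp h2)
  · show lam a ≤ padicValNat 2 (a + b)
    rw [← padicValNat_dvd_iff_le hsum.ne']
    exact Nat.dvd_add (pow_padicValNat_dvd)
      (dvd_trans (pow_dvd_pow 2 hla.le) pow_padicValNat_dvd)

lemma mu_add {a b : ℕ} (ha : 0 < a) (hb : 0 < b) (hab : mu a < lam b) :
    mu (a + b) = mu b := by
  have halt : a < 2 ^ lam b :=
    lt_of_lt_of_le (Nat.lt_pow_succ_log_self one_lt_two a) (Nat.pow_le_pow_right (by norm_num) hab)
  have hlb : lam b ≤ mu b := lam_le_mu hb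
  have h1 : (2:ℕ) ^ mu b ≤ b := Nat.pow_log_le_self 2 hb.ne'
  have h2 : b < 2 ^ (mu b + 1) := Nat.lt_pow_succ_log_self one_lt_two b
  have hd1 : (2:ℕ) ^ lam b ∣ b := pow_padicValNat_dvd
  have hd2 : (2:ℕ) ^ lam b ∣ 2 ^ (mu b + 1) := pow_dvd_pow 2 (by omega)
  have hd3 : (2:ℕ) ^ lam b ∣ 2 ^ (mu b + 1) - b := Nat.dvd_sub hd2 hd1
  have h4 : (2:ℕ) ^ lam b ≤ 2 ^ (mu b + 1) - b := Nat.le_of_dvd (by omega) hd3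
  have h5 : a + b < 2 ^ (mu b + 1) := by omega
  have h6 : (2:ℕ) ^ mu b ≤ a + b := by omega
  exact Nat.log_eq_of_pow_le_of_lt_pow h6 h5

theorem paired_sequence_properties (h : ℕ → ℕ) (hmono : StrictMono h)
    (hpos : ∀ i, 0 < h i) (hap : Apart h) :
    let h' : ℕ → ℕ := fun n => h (2 * n) + h (2 * n + 1)
    StrictMono h' ∧ Apart h' ∧ (∀ n, ¬∃ t, h' n = 2 ^ t) ∧
      ∀ i j, i ≤ j → ∃ p q, p ≤ q ∧ adjSum h' i j = adjSum h p q := by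
  intro h'
  have hap' : ∀ n, mu (h (2 * n)) < lam (h (2 * n + 1)) := fun n => hap _ _ (by omega)
  have hlam' : ∀ n, lam (h' n) = lam (h (2 * n)) :=
    fun n => lam_add (hpos _) (hpos _) (hap' n)
  have hmu' : ∀ n, mu (h' n) = mu (h (2 * n + 1)) :=
    fun n => mu_add (hpos _) (hpos _) (hap' n)
  refine ⟨?_, ?_, ?_, ?_⟩
  · intro a b hab
    have h1 : h (2 * a) < h (2 * b) := hmono (by omega)
    have h2 : h (2 * a + 1) < h (2 * b + 1) := hmono (by omega)
    simp only [h']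
    omega
  · intro i j hij
    rw [hmu' i, hlam' j]
    exact hap _ _ (by omega)
  · rintro n ⟨t, ht⟩
    have h1 : lam (h' n) = t := by
      rw [ht, lam]; simp [padicValNat.prime_pow]
    have h2 : mu (h' n) = t := by
      rw [ht, mu, Nat.log_pow one_lt_two]
    have h3 : lam (h (2 * n)) ≤ mu (h (2 * n)) := lam_le_mu (hpos _)
    have h4 := hap' n
    have h5 : lam (h (2 * n + 1)) ≤ mu (h (2 * n + 1)) := lam_le_mu (hpos _)
    rw [hlam' n] at h1; rw [hmu' n] at h2
    omega
  · intro i j hij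
    refine ⟨2 * i, 2 * j + 1, by omega, ?_⟩
    induction j with
    | zero =>
      interval_cases i
      simp [adjSum, h', Finset.sum_Icc_succ_top]
    | succ k ih =>
      rcases Nat.lt_or_ge i (k + 1) with hk | hk
      · have hik : i ≤ k := by omega
        have e1 : adjSum h' i (k + 1) = adjSum h' i k + h' (k + 1) := by
          rw [adjSum, adjSum, Finset.sum_Icc_succ_top (by omega)]
        have e2 : adjSum h (2 * i) (2 * (k + 1) + 1)
            = adjSum h (2 * i) (2 * k + 1) + h (2 * (k+1)) + h (2 * (k+1) + 1) := by
          rw [adjSum, adjSum, show 2*(k+1)+1 = (2*k+1)+1+1 by ring,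
            Finset.sum_Icc_succ_top (by omega), Finset.sum_Icc_succ_top (by omega)]
          ring_nf
        rw [e1, e2, ih hik]
        simp only [h']; ring
      · have : i = k + 1 := by omega
        subst this
        simp [adjSum, h', show 2*(k+1) ≤ 2*(k+1)+1 by omega, Finset.sum_Icc_succ_top]
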